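/- Let (X, 0, f) and (Y, 0, g) be pointed modules with smash structure map h on X × Y. Let x ∈ X be nonzero with f^[n] x = 0 for some n, and let y ∈ Y be nonzero with g^[k] y ≠ 0 for every k. Then sInf {n : ℕ | h^[n] (x, y) = (0, 0)} = sInf {n : ℕ | f^[n] x = 0}. (Equivalently, when M is nilpotent and N is not, depth (x, y) = depth x.) -/
import Mathlib

/-- **Proposition (depth in the smash product, mixed case).**
Let `(X, 0, f)` and `(Y, 0, g)` be pointed modules with smash structure map `h` on
`X × Y`.  If `x ≠ 0` is annihilated by some iterate of `f`, while `y ≠ 0` is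
annihilated by no iterate of `g`, then the least `n` with `h^[n] (x, y) = (0, 0)`
equals the least `n` with `f^[n] x = 0`; equivalently, when `M` is nilpotent and
`N` is not, `depth (x, y) = depth x`. -/
theorem smash_depth_left {X Y : Type*} [Zero X] [Zero Y]
    [DecidableEq X] [DecidableEq Y]
    (f : X → X) (g : Y → Y) (hf : f 0 = 0) (hg : g 0 = 0)
    (h : X × Y → X × Y)
    (hh : ∀ p : X × Y,
      h p = if f p.1 ≠ 0 ∧ g p.2 ≠ 0 then (f p.1, g p.2) else (0, 0))
    (x : X) (y : Y) (hx : x ≠ 0) (hy : y ≠ 0)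
    (hxn : ∃ n : ℕ, f^[n] x = 0) (hyn : ∀ k : ℕ, g^[k] y ≠ 0) :
    sInf {n : ℕ | h^[n] (x, y) = (0, 0)} = sInf {n : ℕ | f^[n] x = 0} := by
  classical
  set N := sInf {n : ℕ | f^[n] x = 0} with hN
  have hNmem : f^[N] x = 0 := Nat.sInf_mem hxn
  have hlt : ∀ m < N, f^[m] x ≠ 0 := fun m hm => Nat.notMem_of_lt_sInf hm
  have key : ∀ n, f^[n] x ≠ 0 → h^[n] (x, y) = (f^[n] x, g^[n] y) := by
    intro n
    induction n with
    | zero => intro _; simp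
    | succ n ih =>
      intro hne
      have hn : f^[n] x ≠ 0 := by
        intro h0
        apply hne
        rw [Function.iterate_succ_apply', h0, hf]
      rw [Function.iterate_succ_apply', ih hn, hh]
      simp only
      rw [if_pos]
      · rw [← Function.iterate_succ_apply' f, ← Function.iterate_succ_apply' g]
      · exact ⟨by rwa [← Function.iterate_succ_apply' f n x],
          by rw [← Function.iterate_succ_apply' g]; exact hyn _⟩
  have hNpos : 0 < N := by
    rcases Nat.eq_zero_or_pos N with h0 | hp
    · exfalso; apply hx; simpa [h0] using hNmem
    · exact hp
  have hmemh : h^[N] (x, y) = (0, 0) := by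
    obtain ⟨m, hm⟩ : ∃ m, N = m + 1 := ⟨N - 1, (Nat.succ_pred_eq_of_pos hNpos).symm⟩
    rw [hm, Function.iterate_succ_apply', key m (hlt m (by omega)), hh]
    simp only
    rw [if_neg]
    rintro ⟨h1, -⟩
    apply h1
    rw [← Function.iterate_succ_apply' f m x]
    show f^[m+1] x = 0
    rw [← hm]
    exact hNmem
  apply le_antisymm
  · exact Nat.sInf_le hmemh
  · apply le_csInf ⟨N, hmemh⟩
    intro b hb
    by_contra hbn
    push_neg at hbn
    have := key b (hlt b hbn)
    rw [hb] at this
    exact hlt b hbn (congrArg Prod.fst this).symm
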